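/- Let ω = (t_1, t_2, …) be a strictly increasing sequence of positive reals satisfying 0 < inf_{c ≥ 1} t_c/c and sup_{c ≥ 1} t_c/c < ∞. Then for every constant C < ∞ and every α ∈ (0, 1/3), there exist K < ∞ and n₀ such that for all n ≥ n₀: max over integers c with 1 ≤ c ≤ C·n^α of |B(c,n)(ω)²/(2n) − t_c| is at most K·n^{(3α−1)/2}. -/

import Mathlib

open MeasureTheory Filter Topology
open scoped ENNReal NNReal

/-- The function `f(p) = -log(1-p)` for `0 ≤ p < 1`, `f(1) = ∞`, evaluated at `p = i/n`,
taking values in `ℝ≥0∞`. -/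
noncomputable def fE (n : ℕ) (i : ℕ) : ℝ≥0∞ :=
  if i < n then ENNReal.ofReal (-Real.log (1 - (i : ℝ) / n)) else ⊤

/-- The embedded collision process: `Bemb n t c` is `B(c,n)(ω)` for the strictly increasing
sequence `ω = (t 1, t 2, …)` of positive reals (with `t 0 = 0`). -/
noncomputable def Bemb (n : ℕ) (t : ℕ → ℝ) : ℕ → ℕ
  | 0 => 0
  | c + 1 =>
      Bemb n t c +
        sInf {j : ℕ | 1 ≤ j ∧
          ENNReal.ofReal (t (c + 1) - t c) ≤
            ∑ i ∈ Finset.Ico (Bemb n t c - c) (Bemb n t c - c + j), fE n i}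

set_option maxHeartbeats 1000000


lemma fE_mono (n : ℕ) : Monotone (fE n) := by
  intro i j hij
  unfold fE
  by_cases hj : j < n
  · have hi : i < n := lt_of_le_of_lt hij hj
    rw [if_pos hi, if_pos hj]
    apply ENNReal.ofReal_le_ofReal
    have hn0 : 0 < n := by omega
    have hn : (0:ℝ) < n := by exact_mod_cast hn0
    have h1 : (0:ℝ) < 1 - (j:ℝ)/n := by
      rw [sub_pos, div_lt_one hn]; exact_mod_cast hj
    have h2 : (1:ℝ) - (j:ℝ)/n ≤ 1 - (i:ℝ)/n := by
      have : (i:ℝ)/n ≤ (j:ℝ)/n := by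
        apply div_le_div_of_nonneg_right _ hn.le
        · exact_mod_cast hij
      linarith
    have := Real.log_le_log h1 h2
    linarith
  · rw [if_neg hj]; exact le_top

lemma fE_lower (n i : ℕ) : ENNReal.ofReal ((i:ℝ) / n) ≤ fE n i := by
  unfold fE
  by_cases hi : i < n
  · rw [if_pos hi]
    apply ENNReal.ofReal_le_ofReal
    have hn0 : 0 < n := by omega
    have hn' : (0:ℝ) < n := by exact_mod_cast hn0
    have h1 : (0:ℝ) < 1 - (i:ℝ)/n := by
      rw [sub_pos, div_lt_one hn']; exact_mod_cast hi
    have := Real.log_le_sub_one_of_pos h1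
    linarith
  · rw [if_neg hi]; exact le_top

lemma fE_upper (n i : ℕ) (hi : i < n) : fE n i ≤ ENNReal.ofReal ((i:ℝ) / ((n:ℝ) - i)) := by
  unfold fE
  rw [if_pos hi]
  apply ENNReal.ofReal_le_ofReal
  have hn0 : 0 < n := by omega
  have hn' : (0:ℝ) < n := by exact_mod_cast hn0
  have hni : (0:ℝ) < (n:ℝ) - i := by
    have : (i:ℝ) < n := by exact_mod_cast hi
    linarith
  have h1 : (0:ℝ) < 1 - (i:ℝ)/n := by
    rw [sub_pos, div_lt_one hn']; exact_mod_cast hi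
  have h2 : (0:ℝ) < (1 - (i:ℝ)/n)⁻¹ := by positivity
  have hlb := Real.log_le_sub_one_of_pos h2
  have hlog : Real.log (1 - (i:ℝ)/n)⁻¹ = - Real.log (1 - (i:ℝ)/n) := Real.log_inv _
  have heq : (1 - (i:ℝ)/n)⁻¹ - 1 = (i:ℝ) / ((n:ℝ) - i) := by
    rw [eq_div_iff (ne_of_gt hni)]
    field_simp
    ring
  rw [hlog, heq] at hlb
  linarith

noncomputable def Fsum (n m : ℕ) : ℝ≥0∞ := ∑ i ∈ Finset.range m, fE n i


lemma sum_range_cast (m : ℕ) : ∑ i ∈ Finset.range m, (i:ℝ) = m * (m - 1) / 2 := by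
  induction m with
  | zero => simp
  | succ k ih =>
    rw [Finset.sum_range_succ, ih]
    push_cast
    ring

lemma Fsum_ge (n m : ℕ) : ENNReal.ofReal ((m:ℝ) * ((m:ℝ) - 1) / (2 * n)) ≤ Fsum n m := by
  have h1 : ENNReal.ofReal ((m:ℝ) * ((m:ℝ) - 1) / (2 * n)) =
      ENNReal.ofReal (∑ i ∈ Finset.range m, (i:ℝ) / n) := by
    rw [← Finset.sum_div, sum_range_cast]
    rcases Nat.eq_zero_or_pos n with h0 | h0
    · subst h0; simp
    · have : (0:ℝ) < n := by exact_mod_cast h0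
      congr 1
      field_simp
  rw [h1, ENNReal.ofReal_sum_of_nonneg (fun i _ => by positivity)]
  exact Finset.sum_le_sum fun i _ => fE_lower n i

lemma Fsum_le (n m : ℕ) (h : m < n) :
    Fsum n m ≤ ENNReal.ofReal ((m:ℝ) * ((m:ℝ) - 1) / (2 * ((n:ℝ) - m))) := by
  have hnm : (0:ℝ) < (n:ℝ) - m := by
    have : (m:ℝ) < n := by exact_mod_cast h
    linarith
  have h1 : Fsum n m ≤ ∑ i ∈ Finset.range m, ENNReal.ofReal ((i:ℝ) / ((n:ℝ) - m)) := by
    apply Finset.sum_le_sum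
    intro i hi
    have hi' : i < m := Finset.mem_range.mp hi
    have hin : i < n := hi'.trans h
    refine (fE_upper n i hin).trans (ENNReal.ofReal_le_ofReal ?_)
    have hI : (0:ℝ) < (n:ℝ) - i := by
      have : (i:ℝ) < n := by exact_mod_cast hin
      linarith
    apply div_le_div_of_nonneg_left (by positivity) hnm
    have : (i:ℝ) ≤ m := by exact_mod_cast hi'.le
    linarith
  refine h1.trans (le_of_eq ?_)
  rw [← ENNReal.ofReal_sum_of_nonneg (fun i _ => by positivity)]
  congr 1
  rw [← Finset.sum_div, sum_range_cast]
  field_simp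

lemma t_nonneg (t : ℕ → ℝ) (ht : StrictMono t) (ht0 : t 0 = 0) (c : ℕ) : 0 ≤ t c := by
  have := ht.monotone (Nat.zero_le c)
  linarith [ht0 ▸ this]

lemma key (n : ℕ) (t : ℕ → ℝ) (ht : StrictMono t) (ht0 : t 0 = 0) (c : ℕ) :
    c ≤ Bemb n t c ∧
    Fsum n (Bemb n t c - c) ≤ ENNReal.ofReal (t c) ∧
    ENNReal.ofReal (t c) ≤ Fsum n (Bemb n t c - c) + c * fE n (Bemb n t c - c) := by
  induction c with
  | zero =>
    refine ⟨le_refl 0, ?_, ?_⟩ <;> simp [Bemb, Fsum, ht0]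
  | succ c ih =>
    obtain ⟨hBc, hF1, hF2⟩ := ih
    set B := Bemb n t c with hB
    set J := B - c with hJ
    set S := {j : ℕ | 1 ≤ j ∧
          ENNReal.ofReal (t (c + 1) - t c) ≤
            ∑ i ∈ Finset.Ico (B - c) (B - c + j), fE n i} with hS
    have hSne : S.Nonempty := by
      refine ⟨n + 1, by omega, ?_⟩
      have hmem : max (B - c) n ∈ Finset.Ico (B - c) (B - c + (n + 1)) := by
        simp only [Finset.mem_Ico]
        omega
      have htop : fE n (max (B - c) n) = ⊤ := by
        unfold fE
        rw [if_neg (by omega)]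
      have : ∑ i ∈ Finset.Ico (B - c) (B - c + (n + 1)), fE n i = ⊤ := by
        rw [ENNReal.sum_eq_top]
        exact ⟨_, hmem, htop⟩
      rw [this]; exact le_top
    set j := sInf S with hj
    have hjmem : j ∈ S := Nat.sInf_mem hSne
    obtain ⟨hj1, hjsum⟩ := hjmem
    have hBsucc : Bemb n t (c + 1) = B + j := rfl
    have hJsucc : Bemb n t (c + 1) - (c + 1) = J + (j - 1) := by omega
    have hΔpos : 0 < t (c + 1) - t c := sub_pos.mpr (ht (Nat.lt_succ_self c))
    have htc : 0 ≤ t c := t_nonneg t ht ht0 c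
    -- the sum over Ico J (J + (j-1)) is ≤ ofReal Δ
    have hlt : ∑ i ∈ Finset.Ico J (J + (j - 1)), fE n i ≤ ENNReal.ofReal (t (c+1) - t c) := by
      rcases Nat.eq_or_lt_of_le hj1 with h1 | h2
    -- j = 1
      · rw [← h1]
        simp
      · -- j ≥ 2
        have hnotmem : (j - 1) ∉ S := Nat.notMem_of_lt_sInf (by omega)
        rw [hS, Set.mem_setOf_eq] at hnotmem
        push_neg at hnotmem
        exact (hnotmem (by omega)).le
    have hsplit : Fsum n (J + (j - 1)) =
        Fsum n J + ∑ i ∈ Finset.Ico J (J + (j - 1)), fE n i := by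
      unfold Fsum
      rw [Finset.range_eq_Ico, Finset.range_eq_Ico]
      exact (Finset.sum_Ico_consecutive _ (Nat.zero_le _) (Nat.le_add_right _ _)).symm
    have hofadd : ENNReal.ofReal (t (c+1)) =
        ENNReal.ofReal (t c) + ENNReal.ofReal (t (c+1) - t c) := by
      rw [← ENNReal.ofReal_add htc hΔpos.le]
      ring_nf
    refine ⟨by omega, ?_, ?_⟩
    · rw [hJsucc, hsplit, hofadd]
      exact add_le_add hF1 hlt
    · -- lower bound
      have hJle : J ≤ J + (j - 1) := Nat.le_add_right _ _
      have hsplit2 : ∑ i ∈ Finset.Ico J (J + j), fE n i =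
          (∑ i ∈ Finset.Ico J (J + (j - 1)), fE n i) + fE n (J + (j - 1)) := by
        have : J + j = (J + (j - 1)) + 1 := by omega
        rw [this, Finset.sum_Ico_succ_top hJle]
      rw [hJsucc, hofadd]
      calc ENNReal.ofReal (t c) + ENNReal.ofReal (t (c+1) - t c)
          ≤ (Fsum n J + c * fE n J) + ∑ i ∈ Finset.Ico J (J + j), fE n i :=
            add_le_add hF2 hjsum
        _ = Fsum n (J + (j - 1)) + fE n (J + (j - 1)) + c * fE n J := by
            rw [hsplit2, hsplit]; ring
        _ ≤ Fsum n (J + (j - 1)) + fE n (J + (j - 1)) + c * fE n (J + (j - 1)) := by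
            gcongr
            exact fE_mono n hJle
        _ = Fsum n (J + (j - 1)) + (c + 1 : ℕ) * fE n (J + (j - 1)) := by
            push_cast
            ring

theorem stmt_6 (t : ℕ → ℝ) (ht : StrictMono t) (ht0 : t 0 = 0)
    (hL : ∃ L : ℝ, 0 < L ∧ ∀ c : ℕ, 1 ≤ c → L ≤ t c / c)
    (hU : ∃ U : ℝ, ∀ c : ℕ, 1 ≤ c → t c / c ≤ U)
    (C : ℝ) (α : ℝ) (hα : α ∈ Set.Ioo (0 : ℝ) (1 / 3)) :
    ∃ K : ℝ, ∃ n₀ : ℕ, ∀ n : ℕ, n₀ ≤ n → ∀ c : ℕ, 1 ≤ c → (c : ℝ) ≤ C * (n : ℝ) ^ α →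
      |(Bemb n t c : ℝ) ^ 2 / (2 * n) - t c| ≤ K * (n : ℝ) ^ ((3 * α - 1) / 2) := by
  obtain ⟨hα0, hα13⟩ := hα
  obtain ⟨U, hU⟩ := hU
  set U' := max U 1 with hU'
  have hU'1 : (1:ℝ) ≤ U' := le_max_right _ _
  set C' := max C 1 with hC'
  have hC'1 : (1:ℝ) ≤ C' := le_max_right _ _
  set β := (1 + α)/2 with hβ
  set γ := (3*α - 1)/2 with hγ
  set a := Real.sqrt (2*U'*C') with ha
  have ha0 : 0 ≤ a := Real.sqrt_nonneg _
  set K := (1+a)*C' + C'^2 + (1+a) + (1+a)^3 + 2*C'*(1+a)^2 with hK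
  refine ⟨K, ?_⟩
  have h1β : 0 < 1 - β := by rw [hβ]; linarith
  have hev : ∀ᶠ n : ℕ in atTop, 2*(1+a) ≤ (n:ℝ)^(1-β) := by
    have h := (tendsto_rpow_atTop h1β).comp tendsto_natCast_atTop_atTop
    exact h.eventually_ge_atTop (2*(1+a))
  obtain ⟨n₀, hn₀⟩ := Filter.eventually_atTop.mp (hev.and (Filter.eventually_ge_atTop 1))
  refine ⟨n₀, ?_⟩
  intro n hn c hc hcC
  obtain ⟨hevn, hn1⟩ := hn₀ n hn
  set N := (n:ℝ) with hNdef
  have hN1 : (1:ℝ) ≤ N := by rw [hNdef]; exact_mod_cast hn1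
  have hN0 : (0:ℝ) < N := by linarith
  have hmulpow : ∀ e1 e2 : ℝ, N ^ e1 * N ^ e2 = N ^ (e1+e2) :=
    fun e1 e2 => (Real.rpow_add hN0 e1 e2).symm
  have hNone : N ^ (1:ℝ) = N := Real.rpow_one N
  have hexp : ∀ e e' : ℝ, e ≤ e' → N ^ e ≤ N ^ e' :=
    fun e e' h => Real.rpow_le_rpow_of_exponent_le hN1 h
  have hNβ1 : (1:ℝ) ≤ N ^ β := Real.one_le_rpow hN1 (by rw [hβ]; linarith)
  have hNα0 : (0:ℝ) < N ^ α := Real.rpow_pos_of_pos hN0 α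
  have hNγ0 : (0:ℝ) < N ^ γ := Real.rpow_pos_of_pos hN0 γ
  obtain ⟨hBc, hF1, hF2⟩ := key n t ht ht0 c
  set m := Bemb n t c - c with hm
  have hBm : Bemb n t c = m + c := by omega
  set x := (m:ℝ) with hx
  set cc := (c:ℝ) with hccdef
  have hcc1 : (1:ℝ) ≤ cc := by rw [hccdef]; exact_mod_cast hc
  have hcc0 : (0:ℝ) ≤ cc := by linarith
  have hx0 : (0:ℝ) ≤ x := Nat.cast_nonneg m
  have htc0 : 0 ≤ t c := t_nonneg t ht ht0 c
  have hccY : cc ≤ C' * N ^ α :=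
    hcC.trans (mul_le_mul_of_nonneg_right (le_max_left _ _) hNα0.le)
  have htU : t c ≤ U' * cc := by
    have h1 := hU c hc
    have h2 : t c ≤ U * cc := by
      rw [div_le_iff₀ (by linarith : (0:ℝ) < cc)] at h1
      linarith [h1]
    calc t c ≤ U * cc := h2
      _ ≤ U' * cc := mul_le_mul_of_nonneg_right (le_max_left _ _) hcc0
  -- nonnegativity of x*(x-1)
  have hxx0 : 0 ≤ x * (x - 1) := by
    rcases Nat.eq_zero_or_pos m with h | h
    · simp [hx, h]
    · have : (1:ℝ) ≤ x := by rw [hx]; exact_mod_cast h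
      nlinarith
  -- H1
  have hH1 : x * (x - 1) / (2*N) ≤ t c := by
    have h := (Fsum_ge n m).trans hF1
    exact (ENNReal.ofReal_le_ofReal_iff htc0).mp h
  -- bound on x
  have hxx : x * (x - 1) ≤ 2*U'*C' * N ^ (1+α) := by
    have h1 : x * (x-1) ≤ t c * (2*N) := by
      rw [div_le_iff₀ (by positivity)] at hH1
      linarith
    have h2 : t c * (2*N) ≤ U'*(C'*N^α)*(2*N) := by
      have := mul_le_mul_of_nonneg_right htU (by positivity : (0:ℝ) ≤ 2*N)
      refine this.trans ?_
      gcongr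
    have h3 : U'*(C'*N^α)*(2*N) = 2*U'*C'*(N^α * N^(1:ℝ)) := by rw [hNone]; ring
    have h4 : N^α * N^(1:ℝ) = N^(1+α) := by rw [hmulpow, add_comm]
    linarith [h1.trans (h2.trans (le_of_eq (h3.trans (by rw [h4]))))]
  have hsq : Real.sqrt (2*U'*C' * N^(1+α)) = a * N^β := by
    rw [Real.sqrt_mul (by positivity) (N^(1+α))]
    congr 1
    rw [Real.sqrt_eq_rpow, ← Real.rpow_mul hN0.le]
    congr 1
    rw [hβ]; ring
  -- x ≤ 1 + a N^β
  have hxM : x ≤ 1 + a * N ^ β := by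
    rcases le_or_gt x 1 with h | h
    · have : 0 ≤ a * N^β := by positivity
      linarith
    · have h2 : (x-1)^2 ≤ 2*U'*C'*N^(1+α) := by
        calc (x-1)^2 = (x-1)*(x-1) := sq (x-1)
          _ ≤ (x-1)*x := mul_le_mul_of_nonneg_left (by linarith) (by linarith)
          _ = x*(x-1) := mul_comm _ _
          _ ≤ _ := hxx
      have h3 : x - 1 ≤ Real.sqrt (2*U'*C'*N^(1+α)) := by
        calc x - 1 = Real.sqrt ((x-1)^2) := (Real.sqrt_sq (by linarith)).symm
          _ ≤ _ := Real.sqrt_le_sqrt h2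
      rw [hsq] at h3
      linarith
  have hxX : x ≤ (1+a) * N ^ β := by
    have h1 : a * 1 ≤ a * N^β := mul_le_mul_of_nonneg_left hNβ1 ha0
    calc x ≤ 1 + a * N^β := hxM
      _ ≤ N^β + a * N^β := by linarith
      _ = (1+a) * N^β := by ring
  have hx2 : 2 * x ≤ N := by
    have h1 : 2 * x ≤ 2*(1+a) * N^β := by linarith [hxX]
    have h2 : 2*(1+a) * N^β ≤ N^(1-β) * N^β :=
      mul_le_mul_of_nonneg_right hevn (by positivity)
    have h3 : N^(1-β) * N^β = N := by rw [hmulpow]; norm_num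
    linarith
  have hxN : x < N := by linarith
  have hmn : m < n := by
    have := hxN
    rw [hx, hNdef] at this
    exact_mod_cast this
  have hD0 : (0:ℝ) < N - x := by linarith
  -- H2
  have hR1 : (0:ℝ) ≤ x*(x-1)/(2*(N-x)) := div_nonneg hxx0 (by linarith)
  have hR2 : (0:ℝ) ≤ cc * (x/(N-x)) := by positivity
  have hH2 : t c ≤ x*(x-1)/(2*(N-x)) + cc * (x/(N-x)) := by
    have hcast : (c:ℝ≥0∞) * fE n m ≤ ENNReal.ofReal (cc * (x/(N-x))) := by
      calc (c:ℝ≥0∞) * fE n m ≤ (c:ℝ≥0∞) * ENNReal.ofReal (x/(N-x)) := by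
            gcongr
            exact fE_upper n m hmn
        _ = ENNReal.ofReal cc * ENNReal.ofReal (x/(N-x)) := by
            rw [ENNReal.ofReal_natCast]
        _ = ENNReal.ofReal (cc * (x/(N-x))) := (ENNReal.ofReal_mul hcc0).symm
    have h := hF2.trans (add_le_add (Fsum_le n m hmn) hcast)
    rw [← ENNReal.ofReal_add hR1 hR2] at h
    exact (ENNReal.ofReal_le_ofReal_iff (by linarith)).mp h
  -- clearing denominators
  have hH2' : t c * (2*(N-x)) ≤ x*(x-1) + 2*cc*x := by
    have h := mul_le_mul_of_nonneg_right hH2 (show (0:ℝ) ≤ 2*(N-x) by linarith)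
    have he : (x*(x-1)/(2*(N-x)) + cc*(x/(N-x))) * (2*(N-x)) = x*(x-1) + 2*cc*x := by
      field_simp
    linarith
  have hN2x : (0:ℝ) ≤ N - 2*x := by linarith
  have hP : (x*(x-1) + 2*cc*x) * N^2 ≤ ((x+cc)^2*N + 2*x^3 + 4*cc*x^2) * (N-x) := by
    have hid : ((x+cc)^2*N + 2*x^3 + 4*cc*x^2) * (N-x) - (x*(x-1) + 2*cc*x) * N^2
        = x*N^2 + cc^2*(N*(N-x)) + x^3*(N-2*x) + 2*(cc*(x^2*(N-2*x))) := by ring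
    have e1 : (0:ℝ) ≤ x*N^2 := by positivity
    have e2 : (0:ℝ) ≤ cc^2*(N*(N-x)) := by positivity
    have e3 : (0:ℝ) ≤ x^3*(N-2*x) := mul_nonneg (by positivity) hN2x
    have e4 : (0:ℝ) ≤ 2*(cc*(x^2*(N-2*x))) := by
      have : (0:ℝ) ≤ x^2*(N-2*x) := mul_nonneg (by positivity) hN2x
      positivity
    linarith
  have ht3 : t c * (2*N^2) ≤ (x+cc)^2*N + 2*x^3 + 4*cc*x^2 := by
    have h2 : t c * (2*N^2) * (N-x) ≤ ((x+cc)^2*N + 2*x^3 + 4*cc*x^2) * (N-x) := by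
      calc t c * (2*N^2) * (N-x) = (t c * (2*(N-x))) * N^2 := by ring
        _ ≤ (x*(x-1) + 2*cc*x) * N^2 :=
            mul_le_mul_of_nonneg_right hH2' (by positivity)
        _ ≤ _ := hP
    exact le_of_mul_le_mul_right h2 hD0
  have hlow : t c - (x+cc)^2/(2*N) ≤ (2*x^3 + 4*cc*x^2)/(2*N^2) := by
    have h1 : t c ≤ ((x+cc)^2*N + 2*x^3 + 4*cc*x^2)/(2*N^2) := by
      rw [le_div_iff₀ (by positivity)]
      linarith
    have h2 : ((x+cc)^2*N + 2*x^3 + 4*cc*x^2)/(2*N^2)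
        = (x+cc)^2/(2*N) + (2*x^3 + 4*cc*x^2)/(2*N^2) := by
      field_simp
      ring
    linarith
  have hup : (x+cc)^2/(2*N) - t c ≤ (2*x*cc + cc^2 + x)/(2*N) := by
    have he : (x+cc)^2/(2*N) - x*(x-1)/(2*N) = (2*x*cc + cc^2 + x)/(2*N) := by
      field_simp
      ring
    linarith
  -- absolute value bound
  have habs : |(x + cc)^2/(2*N) - t c| ≤
      (2*x*cc + cc^2 + x)/(2*N) + (2*x^3 + 4*cc*x^2)/(2*N^2) := by
    rw [abs_sub_le_iff]
    constructor
    · have h2 : (0:ℝ) ≤ (2*x^3 + 4*cc*x^2)/(2*N^2) := by positivity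
      linarith
    · have h1 : (0:ℝ) ≤ (2*x*cc + cc^2 + x)/(2*N) := by positivity
      linarith
  -- split into five terms
  have hsplit : (2*x*cc + cc^2 + x)/(2*N) + (2*x^3 + 4*cc*x^2)/(2*N^2)
      = x*cc/N + cc^2/(2*N) + x/(2*N) + x^3/N^2 + 2*cc*x^2/N^2 := by
    field_simp
    ring
  -- exponent comparisons
  have p1 : N^β * N^α = N^γ * N := by
    rw [hmulpow, show β + α = γ + 1 by rw [hβ, hγ]; ring, Real.rpow_add hN0, hNone]
  have p2 : N^α * N^α ≤ N^γ * N := by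
    calc N^α * N^α = N^(α+α) := hmulpow α α
      _ ≤ N^(γ+1) := hexp _ _ (by rw [hγ]; linarith)
      _ = N^γ * N := by rw [Real.rpow_add hN0, hNone]
  have p3 : N^β ≤ N^γ * N := by
    calc N^β ≤ N^(γ+1) := hexp _ _ (by rw [hβ, hγ]; linarith)
      _ = N^γ * N := by rw [Real.rpow_add hN0, hNone]
  have p4 : N^β * (N^β * N^β) = N^γ * (N*N) := by
    rw [hmulpow, hmulpow, show β + (β + β) = γ + 1 + 1 by rw [hβ, hγ]; ring,
      Real.rpow_add hN0, Real.rpow_add hN0, hNone]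
    ring
  have p5 : N^α * (N^β * N^β) ≤ N^γ * (N*N) := by
    calc N^α * (N^β * N^β) = N^(α+(β+β)) := by rw [hmulpow, hmulpow]
      _ ≤ N^(γ+1+1) := hexp _ _ (by rw [hβ, hγ]; linarith)
      _ = N^γ * (N*N) := by
          rw [Real.rpow_add hN0, Real.rpow_add hN0, hNone]; ring
  -- five term bounds
  have hT1 : x*cc/N ≤ (1+a)*C'*N^γ := by
    rw [div_le_iff₀ hN0]
    calc x*cc ≤ ((1+a)*N^β)*(C'*N^α) :=
          mul_le_mul hxX hccY hcc0 (by positivity)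
      _ = (1+a)*C'*(N^β*N^α) := by ring
      _ = (1+a)*C'*(N^γ*N) := by rw [p1]
      _ = (1+a)*C'*N^γ*N := by ring
  have hT2 : cc^2/(2*N) ≤ C'^2*N^γ := by
    have h1 : cc^2/(2*N) ≤ cc^2/N :=
      div_le_div_of_nonneg_left (by positivity) hN0 (by linarith)
    refine h1.trans ?_
    rw [div_le_iff₀ hN0]
    calc cc^2 = cc*cc := sq cc
      _ ≤ (C'*N^α)*(C'*N^α) := mul_le_mul hccY hccY hcc0 (by positivity)
      _ = C'^2*(N^α*N^α) := by ring
      _ ≤ C'^2*(N^γ*N) := mul_le_mul_of_nonneg_left p2 (by positivity)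
      _ = C'^2*N^γ*N := by ring
  have hT3 : x/(2*N) ≤ (1+a)*N^γ := by
    have h1 : x/(2*N) ≤ x/N :=
      div_le_div_of_nonneg_left hx0 hN0 (by linarith)
    refine h1.trans ?_
    rw [div_le_iff₀ hN0]
    calc x ≤ (1+a)*N^β := hxX
      _ ≤ (1+a)*(N^γ*N) := mul_le_mul_of_nonneg_left p3 (by positivity)
      _ = (1+a)*N^γ*N := by ring
  have hT4 : x^3/N^2 ≤ (1+a)^3*N^γ := by
    rw [div_le_iff₀ (by positivity)]
    calc x^3 ≤ ((1+a)*N^β)^3 := by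
          apply pow_le_pow_left₀ hx0 hxX
      _ = (1+a)^3*(N^β*(N^β*N^β)) := by ring
      _ = (1+a)^3*(N^γ*(N*N)) := by rw [p4]
      _ = (1+a)^3*N^γ*N^2 := by ring
  have hT5 : 2*cc*x^2/N^2 ≤ 2*C'*(1+a)^2*N^γ := by
    rw [div_le_iff₀ (by positivity)]
    have hx2X : x^2 ≤ ((1+a)*N^β)^2 := by
      apply pow_le_pow_left₀ hx0 hxX
    calc 2*cc*x^2 = 2*(cc*x^2) := by ring
      _ ≤ 2*((C'*N^α)*(((1+a)*N^β)^2)) := by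
          have := mul_le_mul hccY hx2X (by positivity) (by positivity : (0:ℝ) ≤ C'*N^α)
          linarith
      _ = 2*C'*(1+a)^2*(N^α*(N^β*N^β)) := by ring
      _ ≤ 2*C'*(1+a)^2*(N^γ*(N*N)) := mul_le_mul_of_nonneg_left p5 (by positivity)
      _ = 2*C'*(1+a)^2*N^γ*N^2 := by ring
  -- conclude
  have hBcast : (Bemb n t c : ℝ) = x + cc := by
    rw [hBm]; push_cast; ring
  rw [hBcast]
  have hKsum : (1+a)*C'*N^γ + C'^2*N^γ + (1+a)*N^γ + (1+a)^3*N^γ + 2*C'*(1+a)^2*N^γ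
      = K * N^γ := by rw [hK]; ring
  calc |(x + cc)^2/(2*N) - t c|
      ≤ (2*x*cc + cc^2 + x)/(2*N) + (2*x^3 + 4*cc*x^2)/(2*N^2) := habs
    _ = x*cc/N + cc^2/(2*N) + x/(2*N) + x^3/N^2 + 2*cc*x^2/N^2 := hsplit
    _ ≤ (1+a)*C'*N^γ + C'^2*N^γ + (1+a)*N^γ + (1+a)^3*N^γ + 2*C'*(1+a)^2*N^γ := by
        linarith
    _ = K * N^γ := hKsum
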